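/- Let t ∈ Sym(ℤ) be the translation z ↦ z+1 and let k ≥ 3. The subgroup ⟨Alt(ℤ), t^k⟩ of Sym(ℤ) is generated by Alt({1, …, 2k}) ∪ {t^k}, where Alt({1,…,2k}) denotes the even finitary permutations supported on {1,…,2k}. -/

import Mathlib

/-- The group of finitary permutations of `X`: those with finite support. -/
def FSym (X : Type*) : Subgroup (Equiv.Perm X) where
  carrier := {g | {x | g x ≠ x}.Finite}
  one_mem' := by simp
  mul_mem' := by
    intro a b ha hb
    refine (Set.Finite.union ha hb).subset fun x hx => ?_
    simp only [Set.mem_setOf_eq, Set.mem_union, Equiv.Perm.mul_apply] at hx ⊢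
    by_cases h : b x = x
    · left; rwa [h] at hx
    · right; exact h
  inv_mem' := by
    intro a ha
    refine ha.subset fun x hx => ?_
    simp only [Set.mem_setOf_eq] at hx ⊢
    intro h
    exact hx (Equiv.Perm.inv_eq_iff_eq.mpr h.symm)

/-- A permutation is even (finitary) if it is a product of an even number of transpositions. -/
def IsEvenPerm {X : Type*} [DecidableEq X] (g : Equiv.Perm X) : Prop :=
  ∃ l : List (Equiv.Perm X), (∀ τ ∈ l, τ.IsSwap) ∧ Even l.length ∧ g = l.prod

/-- A permutation is odd (finitary) if it is a product of an odd number of transpositions. -/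
def IsOddPerm {X : Type*} [DecidableEq X] (g : Equiv.Perm X) : Prop :=
  ∃ l : List (Equiv.Perm X), (∀ τ ∈ l, τ.IsSwap) ∧ Odd l.length ∧ g = l.prod

/-- `Alt(X)`: the group of even finitary permutations of `X`. -/
def AltGroup (X : Type*) [DecidableEq X] : Subgroup (Equiv.Perm X) where
  carrier := {g | IsEvenPerm g}
  one_mem' := ⟨[], by simp, by simp, by simp⟩
  mul_mem' := by
    rintro a b ⟨l₁, hs₁, he₁, hp₁⟩ ⟨l₂, hs₂, he₂, hp₂⟩
    refine ⟨l₁ ++ l₂, ?_, by simpa using he₁.add he₂, by rw [hp₁, hp₂, List.prod_append]⟩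
    intro τ hτ
    rcases List.mem_append.mp hτ with h | h
    exacts [hs₁ τ h, hs₂ τ h]
  inv_mem' := by
    rintro a ⟨l, hs, he, hp⟩
    refine ⟨(l.map fun x => x⁻¹).reverse, ?_, by simpa using he, ?_⟩
    · intro τ hτ
      simp only [List.mem_reverse, List.mem_map] at hτ
      obtain ⟨σ, hσ, rfl⟩ := hτ
      obtain ⟨x, y, hxy, rfl⟩ := hs σ hσ
      exact ⟨x, y, hxy, by simp⟩
    · rw [hp, List.prod_inv_reverse]


open Equiv

open Equiv

lemma addRight_one_pow (n : ℕ) : (Equiv.addRight (1:ℤ))^n = Equiv.addRight (n:ℤ) := by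
  induction n with
  | zero => ext x; simp
  | succ n ih => ext x; simp [pow_succ, ih]; ring

lemma addRight_zpow' (c : ℤ) (m : ℤ) : (Equiv.addRight c)^m = Equiv.addRight (m*c) := by
  induction m using Int.induction_on with
  | zero => ext x; simp
  | succ n ih => ext x; rw [zpow_add_one]; simp [ih]; ring
  | pred n ih => ext x; rw [zpow_sub_one]; simp [ih]; ring

def Hgen (k : ℕ) : Set (Equiv.Perm ℤ) :=
  {g : Equiv.Perm ℤ | g ∈ AltGroup ℤ ∧
      ∀ x : ℤ, g x ≠ x → x ∈ Set.Icc (1 : ℤ) (2 * k)} ∪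
    {Equiv.addRight (1 : ℤ) ^ k}

lemma swap3_mem_gen (k : ℕ) (j : ℤ) (h1 : 1 ≤ j) (h2 : j + 2 ≤ 2*k) :
    swap j (j+1) * swap (j+1) (j+2) ∈ Hgen k := by
  left
  refine ⟨⟨[swap j (j+1), swap (j+1) (j+2)], ?_, by simp, by simp⟩, ?_⟩
  · rintro τ hτ
    simp only [List.mem_cons, List.mem_singleton] at hτ
    rcases hτ with rfl | rfl | h
    · exact ⟨j, j+1, by omega, rfl⟩
    · exact ⟨j+1, j+2, by omega, rfl⟩
    · simp at h
  · intro x hx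
    by_contra hmem
    simp only [Set.mem_Icc, not_and_or, not_le] at hmem
    have hxj : x ≠ j := by omega
    have hxj1 : x ≠ j+1 := by omega
    have hxj2 : x ≠ j+2 := by omega
    apply hx
    simp [Equiv.Perm.mul_apply, swap_apply_of_ne_of_ne, hxj, hxj1, hxj2]

lemma T_mem (k : ℕ) : Equiv.addRight (1:ℤ)^k ∈ Subgroup.closure (Hgen k) :=
  Subgroup.subset_closure (Or.inr rfl)

lemma c_mem (k : ℕ) (hk : 3 ≤ k) (x : ℤ) :
    swap x (x+1) * swap (x+1) (x+2) ∈ Subgroup.closure (Hgen k) := by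
  have hk0 : (0:ℤ) < (k:ℤ) := by omega
  set m : ℤ := (x - 1) / (k:ℤ) with hm
  set j : ℤ := (x - 1) % (k:ℤ) + 1 with hjdef
  have hdm := Int.mul_ediv_add_emod (x-1) (k:ℤ)
  have hr0 : 0 ≤ (x-1) % (k:ℤ) := Int.emod_nonneg _ (by omega)
  have hrk : (x-1) % (k:ℤ) < k := Int.emod_lt_of_pos _ hk0
  have hj1 : 1 ≤ j := by omega
  have hj2 : j + 2 ≤ 2*(k:ℤ) := by
    have : (k:ℤ) + 2 ≤ 2*(k:ℤ) := by omega
    omega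
  have hx : x = j + m * (k:ℤ) := by
    rw [hjdef]; linarith [hdm]
  set f : Equiv.Perm ℤ := Equiv.addRight (m * (k:ℤ)) with hf
  have hfpow : (Equiv.addRight (1:ℤ)^k)^m = f := by
    rw [addRight_one_pow, addRight_zpow']
  have hfj : f j = x := by simp [hf]; omega
  have hfj1 : f (j+1) = x+1 := by simp [hf]; omega
  have hfj2 : f (j+2) = x+2 := by simp [hf]; omega
  have key : f * (swap j (j+1) * swap (j+1) (j+2)) * f⁻¹ =
      swap x (x+1) * swap (x+1) (x+2) := by
    have h1 := Equiv.swap_apply_apply f j (j+1)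
    have h2 := Equiv.swap_apply_apply f (j+1) (j+2)
    rw [hfj, hfj1] at h1
    rw [hfj1, hfj2] at h2
    rw [h1, h2]; group
  rw [← key]
  have hfmem : f ∈ Subgroup.closure (Hgen k) := by
    rw [← hfpow]; exact Subgroup.zpow_mem _ (T_mem k) m
  exact mul_mem (mul_mem hfmem
    (Subgroup.subset_closure (swap3_mem_gen k j hj1 (by exact_mod_cast hj2)))) (inv_mem hfmem)

lemma g_mem (k : ℕ) (hk : 3 ≤ k) (x : ℤ) :
    swap x (x+1) * swap 0 1 ∈ Subgroup.closure (Hgen k) := by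
  induction x using Int.induction_on with
  | zero =>
    have : swap (0:ℤ) (0+1) * swap 0 1 = 1 := by
      norm_num [Equiv.swap_mul_self]
    rw [this]; exact one_mem _
  | succ n ih =>
    have e : ((n:ℤ)+1+1) = (n:ℤ)+2 := by ring
    have hc := c_mem k hk (n:ℤ)
    have key : swap ((n:ℤ)+1) ((n:ℤ)+2) * swap 0 1 =
        (swap (n:ℤ) ((n:ℤ)+1) * swap ((n:ℤ)+1) ((n:ℤ)+2))⁻¹ *
          (swap (n:ℤ) ((n:ℤ)+1) * swap 0 1) := by
      rw [mul_inv_rev, Equiv.swap_inv, Equiv.swap_inv, mul_assoc,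
        ← mul_assoc (swap (n:ℤ) ((n:ℤ)+1)), Equiv.swap_mul_self, one_mul]
    rw [e, key]
    exact mul_mem (inv_mem hc) ih
  | pred n ih =>
    have e1 : (-(n:ℤ)-1+1) = -(n:ℤ) := by ring
    have e2 : (-(n:ℤ)-1+2) = -(n:ℤ)+1 := by ring
    have hc := c_mem k hk (-(n:ℤ)-1)
    rw [e1, e2] at hc
    have key : swap (-(n:ℤ)-1) (-(n:ℤ)) * swap 0 1 =
        (swap (-(n:ℤ)-1) (-(n:ℤ)) * swap (-(n:ℤ)) (-(n:ℤ)+1)) *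
          (swap (-(n:ℤ)) (-(n:ℤ)+1) * swap 0 1) := by
      rw [mul_assoc, ← mul_assoc (swap (-(n:ℤ)) (-(n:ℤ)+1)), Equiv.swap_mul_self, one_mul]
    rw [e1, key]
    exact mul_mem hc ih

lemma f_mem_aux (k : ℕ) (hk : 3 ≤ k) :
    ∀ n : ℕ, ∀ a b : ℤ, a < b → (b - a).natAbs ≤ n →
      swap a b * swap 0 1 ∈ Subgroup.closure (Hgen k) := by
  intro n
  induction n with
  | zero => intro a b hab h; exfalso; omega
  | succ n ih =>
    intro a b hlt h
    rcases eq_or_lt_of_le (by omega : a + 1 ≤ b) with heq | hlt2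
    · rw [← heq]; exact g_mem k hk a
    · have hba : b ≠ a := by omega
      have hba1 : b ≠ a + 1 := by omega
      have hconj : swap a b = swap a (a+1) * swap (a+1) b * swap a (a+1) := by
        have h1 := Equiv.swap_apply_apply (swap a (a+1)) (a+1) b
        rw [Equiv.swap_apply_right, swap_apply_of_ne_of_ne hba hba1] at h1
        rw [h1, Equiv.swap_inv]
      have key : swap a b * swap 0 1 =
          (swap a (a+1) * swap 0 1) * (swap (a+1) b * swap 0 1)⁻¹ *
            (swap a (a+1) * swap 0 1) := by
        rw [hconj, mul_inv_rev, Equiv.swap_inv, Equiv.swap_inv]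
        simp [mul_assoc, Equiv.swap_mul_self_mul]
      rw [key]
      exact mul_mem (mul_mem (g_mem k hk a)
        (inv_mem (ih (a+1) b hlt2 (by omega)))) (g_mem k hk a)

lemma f_mem (k : ℕ) (hk : 3 ≤ k) (a b : ℤ) (hab : a ≠ b) :
    swap a b * swap 0 1 ∈ Subgroup.closure (Hgen k) := by
  rcases lt_or_gt_of_ne hab with hlt | hlt
  · exact f_mem_aux k hk _ a b hlt le_rfl
  · rw [Equiv.swap_comm]
    exact f_mem_aux k hk _ b a hlt le_rfl

lemma pair_mem (k : ℕ) (hk : 3 ≤ k) (τ₁ τ₂ : Equiv.Perm ℤ)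
    (h₁ : τ₁.IsSwap) (h₂ : τ₂.IsSwap) : τ₁ * τ₂ ∈ Subgroup.closure (Hgen k) := by
  obtain ⟨a, b, hab, rfl⟩ := h₁
  obtain ⟨c, d, hcd, rfl⟩ := h₂
  have key : swap a b * swap c d =
      (swap a b * swap 0 1) * (swap c d * swap 0 1)⁻¹ := by
    rw [mul_inv_rev, Equiv.swap_inv, Equiv.swap_inv, mul_assoc,
      ← mul_assoc (swap (0:ℤ) 1), Equiv.swap_mul_self, one_mul]
  rw [key]
  exact mul_mem (f_mem k hk a b hab) (inv_mem (f_mem k hk c d hcd))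

lemma prod_mem_H (k : ℕ) (hk : 3 ≤ k) :
    ∀ l : List (Equiv.Perm ℤ), (∀ τ ∈ l, τ.IsSwap) → Even l.length →
      l.prod ∈ Subgroup.closure (Hgen k)
  | [] => by intro _ _; simp
  | [τ] => by intro _ h; simp at h
  | τ₁ :: τ₂ :: rest => by
    intro hs he
    rw [List.prod_cons, List.prod_cons, ← mul_assoc]
    refine mul_mem (pair_mem k hk τ₁ τ₂ (hs τ₁ (by simp)) (hs τ₂ (by simp)))
      (prod_mem_H k hk rest (fun τ hτ => hs τ (by simp [hτ])) ?_)
    rcases he with ⟨m, hm⟩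
    simp only [List.length_cons] at hm
    exact ⟨m - 1, by omega⟩

/-- Let `t ∈ Sym(ℤ)` be the translation `z ↦ z + 1` and `k ≥ 3`. The subgroup
`⟨Alt(ℤ), t^k⟩` of `Sym(ℤ)` is generated by `Alt({1, …, 2k}) ∪ {t^k}`, where
`Alt({1, …, 2k})` consists of the even finitary permutations supported on
`{1, …, 2k}`. -/
theorem closure_alt_pow_eq (k : ℕ) (hk : 3 ≤ k) :
    Subgroup.closure ((AltGroup ℤ : Set (Equiv.Perm ℤ)) ∪ {Equiv.addRight (1 : ℤ) ^ k}) =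
      Subgroup.closure ({g : Equiv.Perm ℤ | g ∈ AltGroup ℤ ∧
          ∀ x : ℤ, g x ≠ x → x ∈ Set.Icc (1 : ℤ) (2 * k)} ∪
        {Equiv.addRight (1 : ℤ) ^ k}) := by
  have hset : ({g : Equiv.Perm ℤ | g ∈ AltGroup ℤ ∧
      ∀ x : ℤ, g x ≠ x → x ∈ Set.Icc (1 : ℤ) (2 * k)} ∪
        {Equiv.addRight (1 : ℤ) ^ k}) = Hgen k := rfl
  rw [hset]
  apply le_antisymm
  · rw [Subgroup.closure_le]
    rintro g (hg | hg)
    · obtain ⟨l, hs, he, rfl⟩ := (hg : IsEvenPerm g)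
      exact prod_mem_H k hk l hs he
    · exact Subgroup.subset_closure (Or.inr hg)
  · exact Subgroup.closure_mono (Set.union_subset_union_left _ fun g hg => hg.1)
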